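/- Let G be a triangle-free graph on n vertices with maximum degree Δ, and suppose |E(G)| = Δ(n − Δ) with Δ ≥ 1. Then G is isomorphic to the complete bipartite graph K_{Δ, n−Δ}. -/

import Mathlib

/-- A triangle-free graph on `n` vertices with maximum degree `Δ ≥ 1` and exactly
`Δ * (n - Δ)` edges is isomorphic to the complete bipartite graph `K_{Δ, n-Δ}`. -/
theorem triangle_free_edge_bound_eq {V : Type*} [Fintype V] (G : SimpleGraph V)
    [DecidableRel G.Adj] (h : G.CliqueFree 3) (hΔ : 1 ≤ G.maxDegree)
    (he : G.edgeFinset.card = G.maxDegree * (Fintype.card V - G.maxDegree)) :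
    Nonempty (G ≃g completeBipartiteGraph (Fin G.maxDegree)
      (Fin (Fintype.card V - G.maxDegree))) := by
  classical
  have hne : Nonempty V := by
    rcases isEmpty_or_nonempty V with hV | hV
    · have : G.maxDegree ≤ 0 := G.maxDegree_le_of_forall_degree_le 0 (fun v => isEmptyElim v)
      omega
    · exact hV
  obtain ⟨u, hu⟩ := G.exists_maximal_degree_vertex
  set A : Finset V := G.neighborFinset u with hAdef
  have hA : A.card = G.maxDegree := hu.symm
  have hBcard : Aᶜ.card = Fintype.card V - G.maxDegree := by rw [Finset.card_compl, hA]
  -- A is independent (triangle-free)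
  have hAind : ∀ x ∈ A, ∀ y ∈ A, ¬ G.Adj x y := by
    intro x hx y hy hxy
    exact h {u, x, y} (SimpleGraph.is3Clique_triple_iff.2
      ⟨(G.mem_neighborFinset u x).1 hx, (G.mem_neighborFinset u y).1 hy, hxy⟩)
  -- every edge has an endpoint outside A
  have hmeet : ∀ e ∈ G.edgeFinset, 1 ≤ (Aᶜ.filter (fun v => v ∈ e)).card := by
    intro e he'
    induction e with
    | _ x y =>
      rw [SimpleGraph.mem_edgeFinset, SimpleGraph.mem_edgeSet] at he'
      by_cases hx : x ∈ A
      · by_cases hy : y ∈ A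
        · exact absurd he' (hAind x hx y hy)
        · exact Finset.card_pos.2 ⟨y, Finset.mem_filter.2 ⟨Finset.mem_compl.2 hy, by simp⟩⟩
      · exact Finset.card_pos.2 ⟨x, Finset.mem_filter.2 ⟨Finset.mem_compl.2 hx, by simp⟩⟩
  -- double counting
  have hsum : ∑ v ∈ Aᶜ, G.degree v
      = ∑ e ∈ G.edgeFinset, (Aᶜ.filter (fun v => v ∈ e)).card := by
    calc ∑ v ∈ Aᶜ, G.degree v
        = ∑ v ∈ Aᶜ, (G.edgeFinset.filter (fun e => v ∈ e)).card :=
          Finset.sum_congr rfl fun v _ => by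
            rw [← SimpleGraph.card_incidenceFinset_eq_degree,
              SimpleGraph.incidenceFinset_eq_filter]
      _ = ∑ v ∈ Aᶜ, ∑ e ∈ G.edgeFinset, if v ∈ e then 1 else 0 :=
          Finset.sum_congr rfl fun v _ => Finset.card_filter _ _
      _ = ∑ e ∈ G.edgeFinset, ∑ v ∈ Aᶜ, if v ∈ e then 1 else 0 := Finset.sum_comm
      _ = _ := Finset.sum_congr rfl fun e _ => (Finset.card_filter _ _).symm
  have h1 : G.edgeFinset.card ≤ ∑ v ∈ Aᶜ, G.degree v := by
    rw [hsum]
    calc G.edgeFinset.card = ∑ _e ∈ G.edgeFinset, 1 := by simp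
      _ ≤ _ := Finset.sum_le_sum hmeet
  have h2 : ∑ v ∈ Aᶜ, G.degree v ≤ G.maxDegree * (Fintype.card V - G.maxDegree) := by
    calc ∑ v ∈ Aᶜ, G.degree v ≤ ∑ _v ∈ Aᶜ, G.maxDegree :=
        Finset.sum_le_sum fun v _ => G.degree_le_maxDegree v
      _ = G.maxDegree * (Fintype.card V - G.maxDegree) := by
        rw [Finset.sum_const, hBcard, smul_eq_mul, mul_comm]
  have hsumeq : ∑ v ∈ Aᶜ, G.degree v = G.maxDegree * (Fintype.card V - G.maxDegree) :=
    le_antisymm h2 (he ▸ h1)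
  -- each vertex outside A has max degree
  have hdeg : ∀ v ∈ Aᶜ, G.degree v = G.maxDegree := by
    have := (Finset.sum_eq_sum_iff_of_le (fun v _ => G.degree_le_maxDegree v)).1
      (by rw [hsumeq, Finset.sum_const, hBcard, smul_eq_mul, mul_comm])
    exact this
  -- each edge meets Aᶜ exactly once
  have hone : ∀ e ∈ G.edgeFinset, (Aᶜ.filter (fun v => v ∈ e)).card = 1 := by
    have hs : ∑ e ∈ G.edgeFinset, (Aᶜ.filter (fun v => v ∈ e)).card
        = ∑ _e ∈ G.edgeFinset, 1 := by
      rw [← hsum, hsumeq, ← he]; simp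
    intro e he'
    exact ((Finset.sum_eq_sum_iff_of_le hmeet).1 hs.symm e he').symm
  -- neighborhoods of vertices outside A equal A
  have hNB : ∀ v ∈ Aᶜ, G.neighborFinset v = A := by
    intro v hv
    have hsub : G.neighborFinset v ⊆ A := by
      intro w hw
      by_contra hwA
      have hadj : G.Adj v w := (G.mem_neighborFinset v w).1 hw
      have hedge : s(v, w) ∈ G.edgeFinset := by
        rw [SimpleGraph.mem_edgeFinset, SimpleGraph.mem_edgeSet]; exact hadj
      have h2le : 2 ≤ (Aᶜ.filter (fun x => x ∈ s(v, w))).card := by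
        have : ({v, w} : Finset V) ⊆ Aᶜ.filter (fun x => x ∈ s(v, w)) := by
          intro x hx
          rcases Finset.mem_insert.1 hx with rfl | hx
          · exact Finset.mem_filter.2 ⟨hv, by simp⟩
          · rw [Finset.mem_singleton] at hx; subst hx
            exact Finset.mem_filter.2 ⟨Finset.mem_compl.2 hwA, by simp⟩
        calc 2 = ({v, w} : Finset V).card := by
              rw [Finset.card_insert_of_notMem (by simp [hadj.ne]), Finset.card_singleton]
          _ ≤ _ := Finset.card_le_card this
      rw [hone _ hedge] at h2le
      omega
    exact Finset.eq_of_subset_of_card_le hsub (by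
      rw [hA, ← hdeg v hv, SimpleGraph.card_neighborFinset_eq_degree])
  -- adjacency characterization
  have hAdj : ∀ x y : V, G.Adj x y ↔ ((x ∈ A ∧ y ∉ A) ∨ (x ∉ A ∧ y ∈ A)) := by
    intro x y
    constructor
    · intro hxy
      by_cases hx : x ∈ A
      · have hy : y ∉ A := fun hy => hAind x hx y hy hxy
        exact Or.inl ⟨hx, hy⟩
      · have : y ∈ G.neighborFinset x := (G.mem_neighborFinset x y).2 hxy
        rw [hNB x (Finset.mem_compl.2 hx)] at this
        exact Or.inr ⟨hx, this⟩
    · rintro (⟨hx, hy⟩ | ⟨hx, hy⟩)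
      · have : x ∈ G.neighborFinset y := by rw [hNB y (Finset.mem_compl.2 hy)]; exact hx
        exact ((G.mem_neighborFinset y x).1 this).symm
      · have : y ∈ G.neighborFinset x := by rw [hNB x (Finset.mem_compl.2 hx)]; exact hy
        exact (G.mem_neighborFinset x y).1 this
  -- build the isomorphism
  have hcardA : Fintype.card {x // x ∈ A} = G.maxDegree := by
    rw [Fintype.card_coe, hA]
  have hcardB : Fintype.card {x // ¬ x ∈ A} = Fintype.card V - G.maxDegree := by
    rw [Fintype.card_subtype_compl, Fintype.card_coe, hA]
  let eA : {x // x ∈ A} ≃ Fin G.maxDegree := Fintype.equivFinOfCardEq hcardA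
  let eB : {x // ¬ x ∈ A} ≃ Fin (Fintype.card V - G.maxDegree) :=
    Fintype.equivFinOfCardEq hcardB
  let φ : V ≃ (Fin G.maxDegree ⊕ Fin (Fintype.card V - G.maxDegree)) :=
    (Equiv.sumCompl (· ∈ A)).symm.trans (Equiv.sumCongr eA eB)
  have hφA : ∀ (a : V) (ha : a ∈ A), φ a = Sum.inl (eA ⟨a, ha⟩) := by
    intro a ha
    simp only [φ, Equiv.trans_apply, Equiv.sumCompl_symm_apply_of_pos ha,
      Equiv.sumCongr_apply, Sum.map_inl]
  have hφB : ∀ (a : V) (ha : ¬ a ∈ A), φ a = Sum.inr (eB ⟨a, ha⟩) := by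
    intro a ha
    simp only [φ, Equiv.trans_apply, Equiv.sumCompl_symm_apply_of_neg ha,
      Equiv.sumCongr_apply, Sum.map_inr]
  refine ⟨⟨φ, ?_⟩⟩
  intro a b
  by_cases ha : a ∈ A <;> by_cases hb : b ∈ A <;>
    simp [hφA, hφB, ha, hb, hAdj, completeBipartiteGraph]
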